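/- Suppose the neural tangent kernel Gram matrix H^∞ satisfies H^∞ ⪰ λ₀ I_n for some λ₀ > 0 and that ‖σ′‖_∞ ≤ K₁. Then there exists a measurable map v: ℝ^d → {w ∈ ℝ^d : ‖w‖₂ ≤ 1} such that for every i ∈ {1, …, n}, y_i ∫ σ′(θᵀx_i)·x_iᵀv(θ) dμ₀(θ) ≥ λ₀/(n K₁). -/

import Mathlib

open MeasureTheory Real Finset
open scoped RealInnerProductSpace BigOperators

noncomputable section

/-- Two-layer network `f_Θ(x) = m^{-β} ∑_r a_r σ(θ_rᵀ x)`. -/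
def fnet (d m : ℕ) (β : ℝ) (σ : ℝ → ℝ) (a : Fin m → ℝ)
    (Θ : Fin m → EuclideanSpace ℝ (Fin d)) (x : EuclideanSpace ℝ (Fin d)) : ℝ :=
  (m : ℝ) ^ (-β) * ∑ r, a r * σ ⟪Θ r, x⟫

/-- Functional-gradient value `g_Θ(x_i) = -y_i/(1+exp(y_i f_Θ(x_i)))`. -/
def gval (d m n : ℕ) (β : ℝ) (σ : ℝ → ℝ) (a : Fin m → ℝ)
    (x : Fin n → EuclideanSpace ℝ (Fin d)) (y : Fin n → ℝ)
    (Θ : Fin m → EuclideanSpace ℝ (Fin d)) (i : Fin n) : ℝ :=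
  - y i / (1 + Real.exp (y i * fnet d m β σ a Θ (x i)))

/-- Empirical logistic loss `L(Θ)`. -/
def eloss (d m n : ℕ) (β : ℝ) (σ : ℝ → ℝ) (a : Fin m → ℝ)
    (x : Fin n → EuclideanSpace ℝ (Fin d)) (y : Fin n → ℝ)
    (Θ : Fin m → EuclideanSpace ℝ (Fin d)) : ℝ :=
  (1 / n : ℝ) * ∑ i, Real.log (1 + Real.exp (- y i * fnet d m β σ a Θ (x i)))

/-- `L¹(ν_n)`-norm of the functional gradient. -/
def L1norm (d m n : ℕ) (β : ℝ) (σ : ℝ → ℝ) (a : Fin m → ℝ)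
    (x : Fin n → EuclideanSpace ℝ (Fin d)) (y : Fin n → ℝ)
    (Θ : Fin m → EuclideanSpace ℝ (Fin d)) : ℝ :=
  (1 / n : ℝ) * ∑ i, |gval d m n β σ a x y Θ i|

/-- Parameter gradient `∇_Θ L(Θ)`. -/
def gradL (d m n : ℕ) (β : ℝ) (σ : ℝ → ℝ) (a : Fin m → ℝ)
    (x : Fin n → EuclideanSpace ℝ (Fin d)) (y : Fin n → ℝ)
    (Θ : Fin m → EuclideanSpace ℝ (Fin d)) : Fin m → EuclideanSpace ℝ (Fin d) :=
  fun r => (1 / n : ℝ) • ∑ i,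
    (gval d m n β σ a x y Θ i * (a r * (m : ℝ) ^ (-β) * deriv σ ⟪Θ r, x i⟫)) • x i

/-- Squared Euclidean norm of a parameter block `‖Θ‖₂²`. -/
def nsq (d m : ℕ) (Θ : Fin m → EuclideanSpace ℝ (Fin d)) : ℝ := ∑ r, ‖Θ r‖ ^ 2

/-- Euclidean norm of a parameter block `‖Θ‖₂`. -/
def en2 (d m : ℕ) (Θ : Fin m → EuclideanSpace ℝ (Fin d)) : ℝ := Real.sqrt (nsq d m Θ)

/-- The `(2,1)`-norm `‖Θ‖_{2,1} = ∑_r ‖θ_r‖₂`. -/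
def n21 (d m : ℕ) (Θ : Fin m → EuclideanSpace ℝ (Fin d)) : ℝ := ∑ r, ‖Θ r‖

/-- Gradient-descent iterates `Θ^{(t+1)} = Θ^{(t)} - η ∇_Θ L(Θ^{(t)})`. -/
def gdSeq (d m n : ℕ) (β : ℝ) (σ : ℝ → ℝ) (a : Fin m → ℝ)
    (x : Fin n → EuclideanSpace ℝ (Fin d)) (y : Fin n → ℝ) (η : ℝ)
    (Θ0 : Fin m → EuclideanSpace ℝ (Fin d)) : ℕ → Fin m → EuclideanSpace ℝ (Fin d)
  | 0 => Θ0
  | t + 1 => fun r => gdSeq d m n β σ a x y η Θ0 t r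
      - η • gradL d m n β σ a x y (gdSeq d m n β σ a x y η Θ0 t) r

/-- Kernel-smoothing quantity `Q(Θ) = ‖(1/n) ∑_i g_Θ(x_i) ∇_Θ f_Θ(x_i)‖₂²`. -/
def Qker (d m n : ℕ) (β : ℝ) (σ : ℝ → ℝ) (a : Fin m → ℝ)
    (x : Fin n → EuclideanSpace ℝ (Fin d)) (y : Fin n → ℝ)
    (Θ : Fin m → EuclideanSpace ℝ (Fin d)) : ℝ :=
  nsq d m (fun r => (1 / n : ℝ) • ∑ i,
    (gval d m n β σ a x y Θ i * (a r * (m : ℝ) ^ (-β) * deriv σ ⟪Θ r, x i⟫)) • x i)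

/-- Symmetric signs: `a_r = 1` for `r < k`, `a_r = -1` for `r ≥ k` (with `m = 2k`). -/
def symSigns (k : ℕ) : Fin (2 * k) → ℝ := fun r => if (r : ℕ) < k then 1 else -1

/-- Symmetric initialization: `θ^{(0)}_{r+k} = θ^{(0)}_r` (with `m = 2k`). -/
def symInit (d k : ℕ) (ω : Fin k → EuclideanSpace ℝ (Fin d)) :
    Fin (2 * k) → EuclideanSpace ℝ (Fin d) :=
  fun r => if h : (r : ℕ) < k then ω ⟨r, h⟩ else ω ⟨(r : ℕ) - k, by have := r.isLt; omega⟩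

/-- Ramp loss with margin `γ`. -/
def ramp (γ v : ℝ) : ℝ := if v < 0 then 1 else if v ≤ γ then 1 - v / γ else 0

/-- Empirical Rademacher complexity of the ramp-loss class over the ball of radius `D`
around `Θ0`. -/
def rade (d m n : ℕ) (β γ D : ℝ) (σ : ℝ → ℝ) (a : Fin m → ℝ)
    (x : Fin n → EuclideanSpace ℝ (Fin d)) (y : Fin n → ℝ)
    (Θ0 : Fin m → EuclideanSpace ℝ (Fin d)) : ℝ :=
  (1 / n : ℝ) * (1 / 2 ^ n : ℝ) * ∑ ε : Fin n → Bool,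
    sSup {z : ℝ | ∃ Θ : Fin m → EuclideanSpace ℝ (Fin d),
      en2 d m (fun r => Θ r - Θ0 r) ≤ D ∧
      z = ∑ i, (if ε i then (1 : ℝ) else -1) * ramp γ (y i * fnet d m β σ a Θ (x i))}

/-- Neural tangent kernel. -/
def kNTK (d : ℕ) (σ : ℝ → ℝ) (μ₀ : Measure (EuclideanSpace ℝ (Fin d)))
    (x x' : EuclideanSpace ℝ (Fin d)) : ℝ :=
  ∫ θ, deriv σ ⟪θ, x⟫ * deriv σ ⟪θ, x'⟫ * ⟪x, x'⟫ ∂μ₀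

/-- Proposition 1-(i): positivity of the NTK Gram matrix implies
separability with margin `lam/(nK₁)`. -/
theorem ntk_positivity_implies_separability
    (d n : ℕ) (hn : 0 < n)
    (σ : ℝ → ℝ) (K₁ : ℝ) (hσ : Differentiable ℝ σ) (hK₁pos : 0 < K₁)
    (hK₁ : ∀ z, |deriv σ z| ≤ K₁)
    (x : Fin n → EuclideanSpace ℝ (Fin d)) (y : Fin n → ℝ)
    (hx : ∀ i, ‖x i‖ ≤ 1) (hy : ∀ i, y i = 1 ∨ y i = -1)
    (μ₀ : Measure (EuclideanSpace ℝ (Fin d))) [IsProbabilityMeasure μ₀]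
    (lam : ℝ) (hlam : 0 < lam)
    (hGram : ∀ ξ : Fin n → ℝ,
      lam * ∑ i, ξ i ^ 2 ≤ ∑ i, ∑ j, ξ i * kNTK d σ μ₀ (x i) (x j) * ξ j) :
    ∃ v : EuclideanSpace ℝ (Fin d) → EuclideanSpace ℝ (Fin d),
      Measurable v ∧ (∀ θ, ‖v θ‖ ≤ 1) ∧
      ∀ i, lam / (n * K₁) ≤ y i * ∫ θ, deriv σ ⟪θ, x i⟫ * ⟪x i, v θ⟫ ∂μ₀ := by
  classical
  set M : Matrix (Fin n) (Fin n) ℝ := fun i j => kNTK d σ μ₀ (x i) (x j) with hM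
  -- quadratic form identity
  have hquad : ∀ ξ : Fin n → ℝ, ∑ i, ξ i * (M.mulVec ξ) i
      = ∑ i, ∑ j, ξ i * kNTK d σ μ₀ (x i) (x j) * ξ j := by
    intro ξ
    simp only [Matrix.mulVec, dotProduct, Finset.mul_sum, hM]
    exact Finset.sum_congr rfl fun i _ => Finset.sum_congr rfl fun j _ => by ring
  -- injectivity of mulVec
  have hinj : Function.Injective M.mulVecLin := by
    rw [injective_iff_map_eq_zero]
    intro ξ hξ
    have h0 : ∑ i, ξ i * (M.mulVec ξ) i = 0 := by
      have : M.mulVec ξ = 0 := hξ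
      simp [this]
    have h1 := hGram ξ
    rw [← hquad ξ, h0] at h1
    have hsq : ∑ i, ξ i ^ 2 ≤ 0 := by nlinarith
    have hsq' : ∑ i, ξ i ^ 2 = 0 :=
      le_antisymm hsq (Finset.sum_nonneg fun i _ => sq_nonneg _)
    funext i
    have := (Finset.sum_eq_zero_iff_of_nonneg (fun i _ => sq_nonneg (ξ i))).mp hsq' i
      (Finset.mem_univ i)
    simpa [pow_eq_zero_iff] using this
  obtain ⟨ξ, hξ⟩ := (LinearMap.injective_iff_surjective.mp hinj) y
  have hMξ : ∀ i, ∑ j, M i j * ξ j = y i := by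
    intro i
    have := congrFun hξ i
    simpa [Matrix.mulVecLin, Matrix.mulVec, dotProduct] using this
  have hy1 : ∀ i, |y i| = 1 := by
    intro i; rcases hy i with h | h <;> simp [h]
  -- ℓ1 bound on ξ
  have hl1 : ∑ j, |ξ j| ≤ n / lam := by
    set S := ∑ j, |ξ j| with hS
    have hSnn : 0 ≤ S := Finset.sum_nonneg fun j _ => abs_nonneg _
    have hqy : ∑ i, ξ i * (M.mulVec ξ) i = ∑ i, ξ i * y i := by
      apply Finset.sum_congr rfl; intro i _
      congr 1
      simpa [Matrix.mulVec, dotProduct] using (hMξ i)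
    have hub : ∑ i, ξ i * y i ≤ S := by
      calc ∑ i, ξ i * y i ≤ ∑ i, |ξ i * y i| :=
            Finset.sum_le_sum fun i _ => le_abs_self _
        _ = S := by
            apply Finset.sum_congr rfl; intro i _
            rw [abs_mul, hy1 i, mul_one]
    have hGb : lam * ∑ i, ξ i ^ 2 ≤ S := by
      have := hGram ξ
      rw [← hquad ξ, hqy] at this
      linarith
    have hcs : S ^ 2 ≤ n * ∑ i, ξ i ^ 2 := by
      have := sq_sum_le_card_mul_sum_sq (s := Finset.univ) (f := fun j => |ξ j|)
      simpa [sq_abs] using this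
    by_contra h
    push_neg at h
    have hS0 : 0 < S := lt_of_le_of_lt (div_nonneg (Nat.cast_nonneg n) hlam.le) h
    have h2 : (n:ℝ) < lam * S := by rw [div_lt_iff₀ hlam] at h; linarith
    have h3 : lam * S ^ 2 ≤ n * S := by
      nlinarith [mul_le_mul_of_nonneg_left hcs hlam.le,
        mul_le_mul_of_nonneg_left hGb (Nat.cast_nonneg n : (0:ℝ) ≤ n)]
    nlinarith [mul_lt_mul_of_pos_right h2 hS0]
  set c : ℝ := lam / (n * K₁) with hc
  have hnK : (0:ℝ) < n * K₁ := by positivity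
  have hcpos : 0 < c := div_pos hlam hnK
  refine ⟨fun θ => c • ∑ j, (ξ j * deriv σ ⟪θ, x j⟫) • x j, ?_, ?_, ?_⟩
  · -- measurability
    refine Measurable.const_smul (g := fun θ => ∑ j, (ξ j * deriv σ ⟪θ, x j⟫) • x j) ?_ c
    apply Finset.measurable_sum
    intro j _
    apply Measurable.smul_const
    apply Measurable.const_mul
    exact (measurable_deriv σ).comp
      ((Continuous.inner continuous_id continuous_const).measurable)
  · -- norm bound
    intro θ
    have h1 : ‖∑ j, (ξ j * deriv σ ⟪θ, x j⟫) • x j‖ ≤ ∑ j : Fin n, |ξ j| * K₁ := by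
      refine (norm_sum_le _ _).trans (Finset.sum_le_sum fun j _ => ?_)
      rw [norm_smul]
      have : ‖ξ j * deriv σ ⟪θ, x j⟫‖ ≤ |ξ j| * K₁ := by
        rw [Real.norm_eq_abs, abs_mul]
        exact mul_le_mul_of_nonneg_left (hK₁ _) (abs_nonneg _)
      calc ‖ξ j * deriv σ ⟪θ, x j⟫‖ * ‖x j‖ ≤ ‖ξ j * deriv σ ⟪θ, x j⟫‖ * 1 := by
            exact mul_le_mul_of_nonneg_left (hx j) (norm_nonneg _)
        _ = ‖ξ j * deriv σ ⟪θ, x j⟫‖ := mul_one _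
        _ ≤ |ξ j| * K₁ := this
    rw [norm_smul, Real.norm_eq_abs, abs_of_pos hcpos]
    have h2 : ∑ j : Fin n, |ξ j| * K₁ ≤ (n / lam) * K₁ := by
      rw [← Finset.sum_mul]
      exact mul_le_mul_of_nonneg_right hl1 hK₁pos.le
    calc c * ‖∑ j, (ξ j * deriv σ ⟪θ, x j⟫) • x j‖ ≤ c * ((n / lam) * K₁) := by
          exact mul_le_mul_of_nonneg_left (h1.trans h2) hcpos.le
      _ = 1 := by
          rw [hc, ← mul_assoc, div_mul_div_comm, div_mul_eq_mul_div, div_eq_one_iff_eq (by positivity)]; ring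
  · -- margin
    intro i
    have hint : ∀ j : Fin n, Integrable
        (fun θ => (c * ξ j) * (deriv σ ⟪θ, x i⟫ * deriv σ ⟪θ, x j⟫ * ⟪x i, x j⟫)) μ₀ := by
      intro j
      have hmeas : Measurable (fun θ : EuclideanSpace ℝ (Fin d) =>
          (c * ξ j) * (deriv σ ⟪θ, x i⟫ * deriv σ ⟪θ, x j⟫ * ⟪x i, x j⟫)) := by
        apply Measurable.const_mul
        apply Measurable.mul_const
        exact ((measurable_deriv σ).comp
          ((Continuous.inner continuous_id continuous_const).measurable)).mul
          ((measurable_deriv σ).comp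
          ((Continuous.inner continuous_id continuous_const).measurable))
      refine ⟨hmeas.aestronglyMeasurable, ?_⟩
      apply HasFiniteIntegral.of_bounded
        (C := |c * ξ j| * (K₁ * K₁ * |⟪x i, x j⟫|))
      filter_upwards with θ
      rw [Real.norm_eq_abs, abs_mul]
      apply mul_le_mul_of_nonneg_left _ (abs_nonneg _)
      rw [abs_mul, abs_mul]
      have hab : |deriv σ ⟪θ, x i⟫| * |deriv σ ⟪θ, x j⟫| ≤ K₁ * K₁ :=
        mul_le_mul (hK₁ _) (hK₁ _) (abs_nonneg _) hK₁pos.le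
      exact mul_le_mul_of_nonneg_right hab (abs_nonneg _)
    have hptw : ∀ θ : EuclideanSpace ℝ (Fin d),
        deriv σ ⟪θ, x i⟫ * ⟪x i, (fun θ => c • ∑ j, (ξ j * deriv σ ⟪θ, x j⟫) • x j) θ⟫
        = ∑ j, (c * ξ j) * (deriv σ ⟪θ, x i⟫ * deriv σ ⟪θ, x j⟫ * ⟪x i, x j⟫) := by
      intro θ
      simp only [real_inner_smul_right, inner_sum, real_inner_smul_right]
      rw [Finset.mul_sum, Finset.mul_sum]
      exact Finset.sum_congr rfl fun j _ => by ring
    have hIcalc : (∫ θ, deriv σ ⟪θ, x i⟫ *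
        ⟪x i, (fun θ => c • ∑ j, (ξ j * deriv σ ⟪θ, x j⟫) • x j) θ⟫ ∂μ₀)
        = c * y i := by
      rw [show (fun θ => deriv σ ⟪θ, x i⟫ *
          ⟪x i, (fun θ => c • ∑ j, (ξ j * deriv σ ⟪θ, x j⟫) • x j) θ⟫)
          = fun θ => ∑ j, (c * ξ j) * (deriv σ ⟪θ, x i⟫ * deriv σ ⟪θ, x j⟫ * ⟪x i, x j⟫)
        from funext hptw]
      rw [integral_finset_sum _ fun j _ => hint j]
      have : ∀ j : Fin n, (∫ θ, (c * ξ j) *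
          (deriv σ ⟪θ, x i⟫ * deriv σ ⟪θ, x j⟫ * ⟪x i, x j⟫) ∂μ₀)
          = (c * ξ j) * kNTK d σ μ₀ (x i) (x j) := fun j => integral_const_mul _ _
      rw [Finset.sum_congr rfl fun j _ => this j]
      have : ∑ j, (c * ξ j) * kNTK d σ μ₀ (x i) (x j) = c * ∑ j, M i j * ξ j := by
        rw [Finset.mul_sum]
        exact Finset.sum_congr rfl fun j _ => by rw [hM]; ring
      rw [this, hMξ i]
    rw [hIcalc]
    have : y i * (c * y i) = c := by
      rcases hy i with h | h <;> rw [h] <;> ring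
    rw [this, hc]
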